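/- arXiv:1902.01487 — 5 statements merged into one kernel-verified Lean document; each statement's English description precedes it below -/
import Mathlib

section
/- If the classifier f satisfies X ∩ f(X) ≠ ∅ for all granules X, then for every j: |Low(Y_j)| ≤ n_{jj} − Ind(Σ_{i≠j} n_{ji}) ≤ n_{jj} ≤ |Y_j|, where Ind(b) = 0 if b = 0 and Ind(b) = 1 otherwise. -/
open Finset

def conf {U : Type} [DecidableEq U] {m k : ℕ} (X : Fin m → Finset U)
    (Y : Fin k → Finset U) (f : Fin m → Fin k) (i j : Fin k) : ℕ :=
  ∑ s ∈ Finset.univ.filter (fun s => f s = i), (X s ∩ Y j).card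

def low {U : Type} [DecidableEq U] {m : ℕ} (X : Fin m → Finset U)
    (Z : Finset U) : Finset U :=
  (Finset.univ.filter (fun s => X s ⊆ Z)).biUnion X

def upp {U : Type} [DecidableEq U] {m : ℕ} (X : Fin m → Finset U)
    (Z : Finset U) : Finset U :=
  (Finset.univ.filter (fun s => (X s ∩ Z).Nonempty)).biUnion X

def hatY {U : Type} [DecidableEq U] {m k : ℕ} (X : Fin m → Finset U)
    (f : Fin m → Fin k) (i : Fin k) : Finset U :=
  (Finset.univ.filter (fun s => f s = i)).biUnion X

def ind (b : ℕ) : ℕ := if b = 0 then 0 else 1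

theorem stmt6 (U : Type) [Fintype U] [DecidableEq U] [Nonempty U]
    (m k : ℕ) (X : Fin m → Finset U) (Y : Fin k → Finset U)
    (f : Fin m → Fin k)
    (hXdis : ∀ s t : Fin m, s ≠ t → Disjoint (X s) (X t))
    (hXcov : ∀ u : U, ∃ s, u ∈ X s)
    (hXne : ∀ s, (X s).Nonempty)
    (hYdis : ∀ i j : Fin k, i ≠ j → Disjoint (Y i) (Y j))
    (hYcov : ∀ u : U, ∃ i, u ∈ Y i)
    (hk : 1 < k)
    (hf : ∀ s, (X s ∩ Y (f s)).Nonempty)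
    :
    ∀ j,
      (low X (Y j)).card ≤
        conf X Y f j j - ind (∑ i ∈ Finset.univ.filter (fun i => i ≠ j), conf X Y f j i) ∧
      conf X Y f j j - ind (∑ i ∈ Finset.univ.filter (fun i => i ≠ j), conf X Y f j i) ≤
        conf X Y f j j ∧
      conf X Y f j j ≤ (Y j).card := by
  intro j
  classical
  -- Part 3 first
  have part3 : conf X Y f j j ≤ (Y j).card := by
    have hdisj : ∀ s ∈ Finset.univ.filter (fun s => f s = j), ∀ t ∈ Finset.univ.filter (fun s => f s = j), s ≠ t → Disjoint (X s ∩ Y j) (X t ∩ Y j) := by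
      intro s _ t _ hst
      exact (hXdis s t hst).mono inter_subset_left inter_subset_left
    have := Finset.card_biUnion hdisj
    rw [conf, ← this]
    apply Finset.card_le_card
    intro u hu
    simp only [Finset.mem_biUnion] at hu
    obtain ⟨s, _, hu⟩ := hu
    exact (Finset.mem_inter.mp hu).2
  -- low equals sum over A
  set A := Finset.univ.filter (fun s => X s ⊆ Y j) with hA
  set B := Finset.univ.filter (fun s => f s = j) with hB
  have hAB : A ⊆ B := by
    intro s hs
    simp only [hA, Finset.mem_filter, Finset.mem_univ, true_and] at hs
    simp only [hB, Finset.mem_filter, Finset.mem_univ, true_and]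
    obtain ⟨u, hu⟩ := hf s
    rw [Finset.mem_inter] at hu
    by_contra hne
    exact Finset.disjoint_left.mp (hYdis (f s) j hne) hu.2 (hs hu.1)
  have hlow : (low X (Y j)).card = ∑ s ∈ A, (X s ∩ Y j).card := by
    rw [low, Finset.card_biUnion (fun s _ t _ hst => hXdis s t hst)]
    apply Finset.sum_congr rfl
    intro s hs
    simp only [hA, Finset.mem_filter, Finset.mem_univ, true_and] at hs
    rw [Finset.inter_eq_left.mpr hs]
  have hconf : conf X Y f j j = ∑ s ∈ B, (X s ∩ Y j).card := rfl
  have part1 : (low X (Y j)).card ≤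
      conf X Y f j j - ind (∑ i ∈ Finset.univ.filter (fun i => i ≠ j), conf X Y f j i) := by
    rw [hlow, hconf, ind]
    split
    · simpa using Finset.sum_le_sum_of_subset hAB
    · rename_i hne
      -- find s0 ∈ B \ A
      have : ∃ i, i ≠ j ∧ conf X Y f j i ≠ 0 := by
        by_contra h
        push_neg at h
        apply hne
        apply Finset.sum_eq_zero
        intro i hi
        simp only [Finset.mem_filter, Finset.mem_univ, true_and] at hi
        exact h i hi
      obtain ⟨i, hij, hci⟩ := this
      have : ∃ s ∈ B, (X s ∩ Y i).card ≠ 0 := by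
        by_contra h
        push_neg at h
        exact hci (Finset.sum_eq_zero h)
      obtain ⟨s0, hs0B, hs0⟩ := this
      have hs0A : s0 ∉ A := by
        intro hmem
        simp only [hA, Finset.mem_filter, Finset.mem_univ, true_and] at hmem
        obtain ⟨u, hu⟩ := Finset.card_ne_zero.mp hs0
        rw [Finset.mem_inter] at hu
        exact Finset.disjoint_left.mp (hYdis i j hij) hu.2 (hmem hu.1)
      have hs0pos : 1 ≤ (X s0 ∩ Y j).card := by
        simp only [hB, Finset.mem_filter, Finset.mem_univ, true_and] at hs0B
        have := hf s0
        rw [hs0B] at this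
        exact Finset.card_pos.mpr this
      have hins : insert s0 A ⊆ B := Finset.insert_subset hs0B hAB
      have h1 : ∑ s ∈ A, (X s ∩ Y j).card + 1 ≤ ∑ s ∈ B, (X s ∩ Y j).card := by
        calc ∑ s ∈ A, (X s ∩ Y j).card + 1 ≤ ∑ s ∈ insert s0 A, (X s ∩ Y j).card := by
              rw [Finset.sum_insert hs0A]; omega
          _ ≤ ∑ s ∈ B, (X s ∩ Y j).card := Finset.sum_le_sum_of_subset hins
      omega
  exact ⟨part1, Nat.sub_le _ _, part3⟩
end

section
/- If the classifier f satisfies X ∩ f(X) ≠ ∅ for all granules X, then for every j: |Y_j| ≤ nu_j^* ≤ nu_j^{**} ≤ |Upp(Y_j)|, where nu_j^* := n_{jj} + Σ_{i≠j}(n_{ij} + n_{ji}) and nu_j^{**} := nu_j^* + Σ_{i≠j} Ind(n_{ij}). -/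
open Finset

-- auxiliary lemmas

lemma card_Y_eq {U : Type} [DecidableEq U] {m k : ℕ} (X : Fin m → Finset U)
    (Y : Fin k → Finset U)
    (hXdis : ∀ s t : Fin m, s ≠ t → Disjoint (X s) (X t))
    (hXcov : ∀ u : U, ∃ s, u ∈ X s) (j : Fin k) :
    (Y j).card = ∑ s : Fin m, (X s ∩ Y j).card := by
  have h : Y j = Finset.univ.biUnion (fun s => X s ∩ Y j) := by
    ext u
    simp only [mem_biUnion, mem_univ, true_and, mem_inter]
    constructor
    · intro hu; obtain ⟨s, hs⟩ := hXcov u; exact ⟨s, hs, hu⟩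
    · rintro ⟨s, _, hu⟩; exact hu
  conv_lhs => rw [h]
  rw [card_biUnion]
  intro s _ t _ hst
  exact (hXdis s t hst).mono inter_subset_left inter_subset_left

lemma sdiff_card_eq {U : Type} [DecidableEq U] {k : ℕ}
    (Y : Fin k → Finset U)
    (hYdis : ∀ i j : Fin k, i ≠ j → Disjoint (Y i) (Y j))
    (hYcov : ∀ u : U, ∃ i, u ∈ Y i) (Z : Finset U) (j : Fin k) :
    (Z \ Y j).card = ∑ i ∈ Finset.univ.erase j, (Z ∩ Y i).card := by
  have h : Z \ Y j = (Finset.univ.erase j).biUnion (fun i => Z ∩ Y i) := by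
    ext u
    simp only [mem_sdiff, mem_biUnion, mem_erase, mem_univ, and_true, mem_inter]
    constructor
    · rintro ⟨hz, hnj⟩
      obtain ⟨i, hi⟩ := hYcov u
      refine ⟨i, fun hij => hnj (hij ▸ hi), hz, hi⟩
    · rintro ⟨i, hij, hz, hi⟩
      exact ⟨hz, fun hj => Finset.disjoint_left.mp (hYdis i j hij) hi hj⟩
  rw [h, card_biUnion]
  intro a _ b _ hab
  exact (hYdis a b hab).mono inter_subset_right inter_subset_right

theorem stmt7 (U : Type) [Fintype U] [DecidableEq U] [Nonempty U]
    (m k : ℕ) (X : Fin m → Finset U) (Y : Fin k → Finset U)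
    (f : Fin m → Fin k)
    (hXdis : ∀ s t : Fin m, s ≠ t → Disjoint (X s) (X t))
    (hXcov : ∀ u : U, ∃ s, u ∈ X s)
    (hXne : ∀ s, (X s).Nonempty)
    (hYdis : ∀ i j : Fin k, i ≠ j → Disjoint (Y i) (Y j))
    (hYcov : ∀ u : U, ∃ i, u ∈ Y i)
    (hk : 1 < k)
    (hf : ∀ s, (X s ∩ Y (f s)).Nonempty)
    :
    ∀ j,
      (Y j).card ≤
        conf X Y f j j + ∑ i ∈ Finset.univ.filter (fun i => i ≠ j),
          (conf X Y f i j + conf X Y f j i) ∧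
      conf X Y f j j + ∑ i ∈ Finset.univ.filter (fun i => i ≠ j),
          (conf X Y f i j + conf X Y f j i) ≤
        (conf X Y f j j + ∑ i ∈ Finset.univ.filter (fun i => i ≠ j),
          (conf X Y f i j + conf X Y f j i)) +
          ∑ i ∈ Finset.univ.filter (fun i => i ≠ j), ind (conf X Y f i j) ∧
      (conf X Y f j j + ∑ i ∈ Finset.univ.filter (fun i => i ≠ j),
          (conf X Y f i j + conf X Y f j i)) +
          ∑ i ∈ Finset.univ.filter (fun i => i ≠ j), ind (conf X Y f i j) ≤
        (upp X (Y j)).card := by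
  intro j
  have hfilter : (Finset.univ.filter (fun i : Fin k => i ≠ j)) = Finset.univ.erase j :=
    filter_ne' _ _
  -- total column sum equals |Y j|
  have hcol : ∑ i : Fin k, conf X Y f i j = (Y j).card := by
    rw [card_Y_eq X Y hXdis hXcov j]
    exact sum_fiberwise_of_maps_to (fun s _ => mem_univ (f s)) _
  have hsplit : ∑ i : Fin k, conf X Y f i j
      = conf X Y f j j + ∑ i ∈ Finset.univ.erase j, conf X Y f i j :=
    (Finset.add_sum_erase _ _ (mem_univ j)).symm
  refine ⟨?_, ?_, ?_⟩
  · -- first inequality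
    rw [hfilter]
    calc (Y j).card = conf X Y f j j + ∑ i ∈ Finset.univ.erase j, conf X Y f i j := by
          rw [← hcol, hsplit]
      _ ≤ _ := by
          gcongr with i _
          exact Nat.le_add_right _ _
  · exact Nat.le_add_right _ _
  · -- third inequality
    rw [hfilter]
    set S : Finset (Fin m) := Finset.univ.filter (fun s => (X s ∩ Y j).Nonempty) with hS
    have hupp : (upp X (Y j)).card = ∑ s ∈ S, (X s).card := by
      rw [upp, card_biUnion]
      intro a ha b hb hab
      exact hXdis a b hab
    have hsum : ∑ s ∈ S, (X s).card
        = ∑ s ∈ S, (X s ∩ Y j).card + ∑ s ∈ S, (X s \ Y j).card := by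
      rw [← sum_add_distrib]
      exact Finset.sum_congr rfl (fun s _ => (card_inter_add_card_sdiff _ _).symm)
    -- term 1: ∑ i conf i j = ∑ s ∈ S, |X s ∩ Y j|
    have h1 : ∑ i : Fin k, conf X Y f i j = ∑ s ∈ S, (X s ∩ Y j).card := by
      rw [hcol, card_Y_eq X Y hXdis hXcov j]
      rw [← Finset.sum_filter_add_sum_filter_not Finset.univ
          (fun s => (X s ∩ Y j).Nonempty) (fun s => (X s ∩ Y j).card)]
      have : ∑ s ∈ Finset.univ.filter (fun s => ¬ (X s ∩ Y j).Nonempty),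
          (X s ∩ Y j).card = 0 := by
        refine Finset.sum_eq_zero fun s hs => ?_
        rw [Finset.mem_filter, Finset.not_nonempty_iff_eq_empty] at hs
        rw [hs.2, card_empty]
      rw [this, add_zero]
    -- S splits by f s = j
    have hSj : S.filter (fun s => f s = j) = Finset.univ.filter (fun s => f s = j) := by
      ext s
      simp only [hS, mem_filter, mem_univ, true_and, and_iff_right_iff_imp]
      intro hfs
      have := hf s
      rwa [hfs] at this
    -- term 2: ∑_{i≠j} conf j i = ∑_{s ∈ S, f s = j} |X s \ Y j|
    have h2 : ∑ i ∈ Finset.univ.erase j, conf X Y f j i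
        = ∑ s ∈ S.filter (fun s => f s = j), (X s \ Y j).card := by
      rw [hSj]
      unfold conf
      rw [Finset.sum_comm]
      exact Finset.sum_congr rfl fun s _ =>
        (sdiff_card_eq Y hYdis hYcov (X s) j).symm
    -- term 3: indicator sum
    have h3 : ∑ i ∈ Finset.univ.erase j, ind (conf X Y f i j)
        ≤ ∑ s ∈ S.filter (fun s => ¬ f s = j), (X s \ Y j).card := by
      have hstep : ∀ s ∈ S.filter (fun s => ¬ f s = j), 1 ≤ (X s \ Y j).card := by
        intro s hs
        rw [mem_filter] at hs
        obtain ⟨u, hu⟩ := hf s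
        rw [mem_inter] at hu
        have hunj : u ∉ Y j := fun hj =>
          Finset.disjoint_left.mp (hYdis (f s) j hs.2) hu.2 hj
        have : u ∈ X s \ Y j := mem_sdiff.mpr ⟨hu.1, hunj⟩
        exact Finset.card_pos.mpr ⟨u, this⟩
      calc ∑ i ∈ Finset.univ.erase j, ind (conf X Y f i j)
          = ((Finset.univ.erase j).filter (fun i => conf X Y f i j ≠ 0)).card := by
            rw [Finset.card_filter]
            refine Finset.sum_congr rfl fun i _ => ?_
            unfold ind
            by_cases h : conf X Y f i j = 0 <;> simp [h]
        _ ≤ (S.filter (fun s => ¬ f s = j)).card := by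
            have hsub : (Finset.univ.erase j).filter (fun i => conf X Y f i j ≠ 0)
                ⊆ (S.filter (fun s => ¬ f s = j)).image f := by
              intro i hi
              rw [mem_filter, mem_erase] at hi
              obtain ⟨⟨hij, _⟩, hne⟩ := hi
              have : ∃ s ∈ Finset.univ.filter (fun s => f s = i),
                  (X s ∩ Y j).card ≠ 0 := by
                by_contra hc
                push_neg at hc
                exact hne (Finset.sum_eq_zero hc)
              obtain ⟨s, hs, hcard⟩ := this
              rw [mem_filter] at hs
              rw [Finset.mem_image]
              refine ⟨s, ?_, hs.2⟩
              rw [mem_filter, hS, mem_filter]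
              refine ⟨⟨mem_univ s, ?_⟩, ?_⟩
              · exact Finset.card_pos.mp (Nat.pos_of_ne_zero hcard)
              · rw [hs.2]; exact hij
            exact le_trans (Finset.card_le_card hsub) Finset.card_image_le
        _ ≤ ∑ s ∈ S.filter (fun s => ¬ f s = j), (X s \ Y j).card := by
            calc (S.filter (fun s => ¬ f s = j)).card
                = ∑ _s ∈ S.filter (fun s => ¬ f s = j), 1 := by
                  rw [Finset.sum_const, smul_eq_mul, mul_one]
              _ ≤ _ := Finset.sum_le_sum hstep
    -- combine
    rw [hupp, hsum, Finset.sum_add_distrib]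
    have hA : conf X Y f j j + ∑ i ∈ Finset.univ.erase j, conf X Y f i j
        = ∑ s ∈ S, (X s ∩ Y j).card := hsplit.symm.trans h1
    have hsplitS : ∑ s ∈ S, (X s \ Y j).card
        = ∑ s ∈ S.filter (fun s => f s = j), (X s \ Y j).card
          + ∑ s ∈ S.filter (fun s => ¬ f s = j), (X s \ Y j).card :=
      (Finset.sum_filter_add_sum_filter_not _ _ _).symm
    rw [hsplitS, ← hA, ← h2]
    omega
end

section
/- If f is a maximal row classifier, then for every j: |Low(Y_j)| ≤ nl_j^m ≤ nl_j^{**}, where nl_j^m := n_{jj} − max{n_{jt} : 1 ≤ t ≤ k, t ≠ j} and nl_j^{**} := n_{jj} − Ind(Σ_{i≠j} n_{ji}). -/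
open Finset

theorem stmt11 (U : Type) [Fintype U] [DecidableEq U] [Nonempty U]
    (m k : ℕ) (X : Fin m → Finset U) (Y : Fin k → Finset U)
    (f : Fin m → Fin k)
    (hXdis : ∀ s t : Fin m, s ≠ t → Disjoint (X s) (X t))
    (hXcov : ∀ u : U, ∃ s, u ∈ X s)
    (hXne : ∀ s, (X s).Nonempty)
    (hYdis : ∀ i j : Fin k, i ≠ j → Disjoint (Y i) (Y j))
    (hYcov : ∀ u : U, ∃ i, u ∈ Y i)
    (hk : 1 < k)
    (hmrc : ∀ s j, (X s ∩ Y j).card ≤ (X s ∩ Y (f s)).card)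
    :
    ∀ j,
      (low X (Y j)).card ≤
        conf X Y f j j -
          (Finset.univ.filter (fun t => t ≠ j)).sup (fun t => conf X Y f j t) ∧
      conf X Y f j j -
          (Finset.univ.filter (fun t => t ≠ j)).sup (fun t => conf X Y f j t) ≤
        conf X Y f j j - ind (∑ i ∈ Finset.univ.filter (fun i => i ≠ j), conf X Y f j i) := by
  intro j
  set S := (Finset.univ.filter (fun t => t ≠ j)).sup (fun t => conf X Y f j t) with hS
  set L := (low X (Y j)).card with hL
  -- granules contained in Y j are classified to j
  have hfs : ∀ s : Fin m, X s ⊆ Y j → f s = j := by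
    intro s hs
    have hcard : (X s ∩ Y j) = X s := Finset.inter_eq_left.mpr hs
    have hne : (X s ∩ Y (f s)).Nonempty := by
      rw [← Finset.card_pos]
      calc 0 < (X s).card := Finset.card_pos.mpr (hXne s)
        _ = (X s ∩ Y j).card := by rw [hcard]
        _ ≤ (X s ∩ Y (f s)).card := hmrc s j
    obtain ⟨u, hu⟩ := hne
    by_contra hne'
    exact Finset.disjoint_left.mp (hYdis (f s) j hne')
      (Finset.mem_inter.mp hu).2 (hs (Finset.mem_inter.mp hu).1)
  have hLsum : L = ∑ s ∈ Finset.univ.filter (fun s => X s ⊆ Y j), (X s).card := by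
    rw [hL, low]
    exact Finset.card_biUnion (fun s _ t _ hst => hXdis s t hst)
  have hAF : (Finset.univ.filter (fun s : Fin m => f s = j)).filter
      (fun s => X s ⊆ Y j) = Finset.univ.filter (fun s => X s ⊆ Y j) := by
    ext s
    simp only [Finset.mem_filter, Finset.mem_univ, true_and]
    exact ⟨fun h => h.2, fun h => ⟨hfs s h, h⟩⟩
  -- key inequality
  have hkey : ∀ t : Fin k, t ≠ j → L + conf X Y f j t ≤ conf X Y f j j := by
    intro t ht
    have hsplit := Finset.sum_filter_add_sum_filter_not
      (Finset.univ.filter (fun s : Fin m => f s = j)) (fun s => X s ⊆ Y j)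
      (fun s => (X s ∩ Y j).card)
    have hsplit' := Finset.sum_filter_add_sum_filter_not
      (Finset.univ.filter (fun s : Fin m => f s = j)) (fun s => X s ⊆ Y j)
      (fun s => (X s ∩ Y t).card)
    have h1 : ∑ s ∈ (Finset.univ.filter (fun s : Fin m => f s = j)).filter
        (fun s => X s ⊆ Y j), (X s ∩ Y j).card = L := by
      rw [hAF, hLsum]
      exact Finset.sum_congr rfl (fun s hs => by
        rw [Finset.inter_eq_left.mpr (Finset.mem_filter.mp hs).2])
    have h2 : ∑ s ∈ (Finset.univ.filter (fun s : Fin m => f s = j)).filter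
        (fun s => X s ⊆ Y j), (X s ∩ Y t).card = 0 := by
      apply Finset.sum_eq_zero
      intro s hs
      have hsub : X s ⊆ Y j := (Finset.mem_filter.mp hs).2
      rw [Finset.card_eq_zero, ← Finset.subset_empty]
      intro u hu
      exact absurd ((Finset.mem_inter.mp hu).2)
        (Finset.disjoint_left.mp (hYdis j t (Ne.symm ht)) (hsub (Finset.mem_inter.mp hu).1))
    have h3 : ∑ s ∈ (Finset.univ.filter (fun s : Fin m => f s = j)).filter
        (fun s => ¬ X s ⊆ Y j), (X s ∩ Y t).card ≤
        ∑ s ∈ (Finset.univ.filter (fun s : Fin m => f s = j)).filter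
        (fun s => ¬ X s ⊆ Y j), (X s ∩ Y j).card := by
      apply Finset.sum_le_sum
      intro s hs
      have hfsj : f s = j :=
        (Finset.mem_filter.mp (Finset.mem_filter.mp hs).1).2
      have := hmrc s t
      rwa [hfsj] at this
    calc L + conf X Y f j t
        = L + (∑ s ∈ (Finset.univ.filter (fun s : Fin m => f s = j)).filter
            (fun s => X s ⊆ Y j), (X s ∩ Y t).card +
          ∑ s ∈ (Finset.univ.filter (fun s : Fin m => f s = j)).filter
            (fun s => ¬ X s ⊆ Y j), (X s ∩ Y t).card) := by rw [hsplit']; rfl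
      _ = L + ∑ s ∈ (Finset.univ.filter (fun s : Fin m => f s = j)).filter
            (fun s => ¬ X s ⊆ Y j), (X s ∩ Y t).card := by rw [h2, zero_add]
      _ ≤ L + ∑ s ∈ (Finset.univ.filter (fun s : Fin m => f s = j)).filter
            (fun s => ¬ X s ⊆ Y j), (X s ∩ Y j).card := by exact Nat.add_le_add_left h3 L
      _ = conf X Y f j j := by rw [← h1, hsplit]; rfl
  obtain ⟨t0, ht0⟩ : ∃ t : Fin k, t ≠ j := by
    have : 1 < Fintype.card (Fin k) := by simpa using hk
    exact Fintype.exists_ne_of_one_lt_card this j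
  have hLc : L ≤ conf X Y f j j :=
    le_trans (Nat.le_add_right L _) (hkey t0 ht0)
  have hLS : L + S ≤ conf X Y f j j := by
    have hsup : S ≤ conf X Y f j j - L := by
      apply Finset.sup_le
      intro t ht
      have ht' : t ≠ j := (Finset.mem_filter.mp ht).2
      exact Nat.le_sub_of_add_le (by rw [Nat.add_comm]; exact hkey t ht')
    calc L + S ≤ L + (conf X Y f j j - L) := Nat.add_le_add_left hsup L
      _ = conf X Y f j j := Nat.add_sub_cancel' hLc
  constructor
  · exact Nat.le_sub_of_add_le hLS
  · apply Nat.sub_le_sub_left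
    unfold ind
    split
    · exact Nat.zero_le S
    · rename_i hsum
      obtain ⟨i, hi, hine⟩ : ∃ i ∈ Finset.univ.filter (fun i : Fin k => i ≠ j),
          conf X Y f j i ≠ 0 := by
        by_contra h
        push_neg at h
        exact hsum (Finset.sum_eq_zero h)
      calc 1 ≤ conf X Y f j i := Nat.one_le_iff_ne_zero.mpr hine
        _ ≤ S := Finset.le_sup hi
end

section
/- If f is a maximal row classifier, then for every j: nl_j^{**} ≤ nu_j^m ≤ |Upp(Y_j)|, where nl_j^{**} := n_{jj} − Ind(Σ_{i≠j} n_{ji}) and nu_j^m := n_{jj} + Σ_{i≠j}(n_{ji} + 2·n_{ij}). -/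
open Finset

theorem stmt12 (U : Type) [Fintype U] [DecidableEq U] [Nonempty U]
    (m k : ℕ) (X : Fin m → Finset U) (Y : Fin k → Finset U)
    (f : Fin m → Fin k)
    (hXdis : ∀ s t : Fin m, s ≠ t → Disjoint (X s) (X t))
    (hXcov : ∀ u : U, ∃ s, u ∈ X s)
    (hXne : ∀ s, (X s).Nonempty)
    (hYdis : ∀ i j : Fin k, i ≠ j → Disjoint (Y i) (Y j))
    (hYcov : ∀ u : U, ∃ i, u ∈ Y i)
    (hk : 1 < k)
    (hmrc : ∀ s j, (X s ∩ Y j).card ≤ (X s ∩ Y (f s)).card)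
    :
    ∀ j,
      conf X Y f j j - ind (∑ i ∈ Finset.univ.filter (fun i => i ≠ j), conf X Y f j i) ≤
        conf X Y f j j + ∑ i ∈ Finset.univ.filter (fun i => i ≠ j),
          (conf X Y f j i + 2 * conf X Y f i j) ∧
      conf X Y f j j + ∑ i ∈ Finset.univ.filter (fun i => i ≠ j),
          (conf X Y f j i + 2 * conf X Y f i j) ≤
        (upp X (Y j)).card := by
  intro j
  -- shared facts
  have hne' : ∀ s, f s = j → (X s ∩ Y j).Nonempty := by
    intro s hs
    obtain ⟨u, hu⟩ := hXne s
    obtain ⟨i, hi⟩ := hYcov u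
    have h1 : 0 < (X s ∩ Y i).card :=
      Finset.card_pos.mpr ⟨u, Finset.mem_inter.mpr ⟨hu, hi⟩⟩
    have h2 := hmrc s i
    rw [hs] at h2
    exact Finset.card_pos.mp (lt_of_lt_of_le h1 h2)
  constructor
  · exact le_trans (Nat.sub_le _ _) (Nat.le_add_right _ _)
  · have hsplit : ∀ s : Fin m, (X s).card = ∑ i, (X s ∩ Y i).card := by
      intro s
      have hx : X s = Finset.univ.biUnion (fun i => X s ∩ Y i) := by
        ext u
        simp only [Finset.mem_biUnion, Finset.mem_univ, true_and, Finset.mem_inter]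
        constructor
        · intro hu; obtain ⟨i, hi⟩ := hYcov u; exact ⟨i, hu, hi⟩
        · rintro ⟨i, hu, _⟩; exact hu
      have hd : ∀ i ∈ (Finset.univ : Finset (Fin k)), ∀ i' ∈ Finset.univ, i ≠ i' →
          Disjoint (X s ∩ Y i) (X s ∩ Y i') := by
        intro i _ i' _ hii'
        refine Finset.disjoint_left.mpr fun a ha ha' => ?_
        exact Finset.disjoint_left.mp (hYdis i i' hii')
          (Finset.mem_inter.mp ha).2 (Finset.mem_inter.mp ha').2
      calc (X s).card = (Finset.univ.biUnion fun i => X s ∩ Y i).card := by rw [← hx]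
        _ = ∑ i, (X s ∩ Y i).card := Finset.card_biUnion hd
    -- step A
    have hA : conf X Y f j j + ∑ i ∈ Finset.univ.filter (fun i => i ≠ j), conf X Y f j i
        = ∑ s ∈ Finset.univ.filter (fun s => f s = j), (X s).card := by
      rw [Finset.filter_ne', Finset.add_sum_erase _ _ (Finset.mem_univ j)]
      unfold conf
      rw [Finset.sum_comm]
      exact Finset.sum_congr rfl fun s _ => (hsplit s).symm
    -- step B
    have hB : ∑ i ∈ Finset.univ.filter (fun i => i ≠ j), conf X Y f i j
        = ∑ s ∈ Finset.univ.filter (fun s => f s ≠ j), (X s ∩ Y j).card := by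
      rw [← Finset.sum_fiberwise_of_maps_to (g := f)
        (t := Finset.univ.filter (fun i => i ≠ j))
        (fun s hs => by simp only [Finset.mem_filter, Finset.mem_univ, true_and] at hs ⊢; exact hs)]
      refine Finset.sum_congr rfl fun i hi => ?_
      simp only [Finset.mem_filter, Finset.mem_univ, true_and] at hi
      unfold conf
      refine Finset.sum_congr ?_ fun _ _ => rfl
      ext s
      simp only [Finset.mem_filter, Finset.mem_univ, true_and]
      exact ⟨fun h => ⟨fun hj => hi (h.symm.trans hj), h⟩, fun h => h.2⟩
    -- step C
    have hC : (upp X (Y j)).card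
        = ∑ s ∈ Finset.univ.filter (fun s => (X s ∩ Y j).Nonempty), (X s).card := by
      unfold upp
      exact Finset.card_biUnion fun s _ t _ hst => hXdis s t hst
    -- key bound for misclassified granules
    have key : ∀ s, f s ≠ j → 2 * (X s ∩ Y j).card ≤ (X s).card := by
      intro s hs
      have hd : Disjoint (X s ∩ Y j) (X s ∩ Y (f s)) := by
        refine Finset.disjoint_left.mpr fun a ha ha' => ?_
        exact Finset.disjoint_left.mp (hYdis j (f s) (Ne.symm hs))
          (Finset.mem_inter.mp ha).2 (Finset.mem_inter.mp ha').2
      calc 2 * (X s ∩ Y j).card = (X s ∩ Y j).card + (X s ∩ Y j).card := two_mul _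
        _ ≤ (X s ∩ Y j).card + (X s ∩ Y (f s)).card := by
            exact Nat.add_le_add_left (hmrc s j) _
        _ = ((X s ∩ Y j) ∪ (X s ∩ Y (f s))).card := (Finset.card_union_of_disjoint hd).symm
        _ ≤ (X s).card := Finset.card_le_card
            (Finset.union_subset Finset.inter_subset_left Finset.inter_subset_left)
    -- combine
    have lhs_eq : conf X Y f j j + ∑ i ∈ Finset.univ.filter (fun i => i ≠ j),
          (conf X Y f j i + 2 * conf X Y f i j)
        = ∑ s ∈ Finset.univ.filter (fun s => f s = j), (X s).card
          + 2 * ∑ s ∈ Finset.univ.filter (fun s => f s ≠ j), (X s ∩ Y j).card := by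
      rw [Finset.sum_add_distrib, ← Finset.mul_sum, ← add_assoc, hA, hB]
    rw [lhs_eq, hC]
    set A := Finset.univ.filter (fun s => (X s ∩ Y j).Nonempty) with hAdef
    have hsplitA : ∑ s ∈ A.filter (fun s => f s = j), (X s).card
        + ∑ s ∈ A.filter (fun s => ¬ f s = j), (X s).card = ∑ s ∈ A, (X s).card :=
      Finset.sum_filter_add_sum_filter_not A _ _
    have h1 : A.filter (fun s => f s = j) = Finset.univ.filter (fun s => f s = j) := by
      ext s
      simp only [hAdef, Finset.mem_filter, Finset.mem_univ, true_and, Finset.filter_filter]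
      exact ⟨fun h => h.2, fun h => ⟨hne' s h, h⟩⟩
    have h2 : 2 * ∑ s ∈ Finset.univ.filter (fun s => f s ≠ j), (X s ∩ Y j).card
        ≤ ∑ s ∈ A.filter (fun s => ¬ f s = j), (X s).card := by
      rw [Finset.mul_sum]
      have hsub : ∀ s ∈ Finset.univ.filter (fun s => f s ≠ j),
          s ∉ A.filter (fun s => ¬ f s = j) → 2 * (X s ∩ Y j).card = 0 := by
        intro s hs hns
        simp only [hAdef, Finset.mem_filter, Finset.mem_univ, true_and] at hs hns
        have : ¬ (X s ∩ Y j).Nonempty := fun h => hns ⟨h, hs⟩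
        rw [Finset.not_nonempty_iff_eq_empty] at this
        rw [this]; simp
      calc ∑ s ∈ Finset.univ.filter (fun s => f s ≠ j), 2 * (X s ∩ Y j).card
          = ∑ s ∈ A.filter (fun s => ¬ f s = j), 2 * (X s ∩ Y j).card := by
            refine (Finset.sum_subset ?_ hsub).symm
            intro s hs
            simp only [hAdef, Finset.mem_filter, Finset.mem_univ, true_and] at hs ⊢
            exact hs.2
        _ ≤ ∑ s ∈ A.filter (fun s => ¬ f s = j), (X s).card := by
            refine Finset.sum_le_sum fun s hs => ?_
            simp only [Finset.mem_filter] at hs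
            exact key s hs.2
    calc ∑ s ∈ Finset.univ.filter (fun s => f s = j), (X s).card
          + 2 * ∑ s ∈ Finset.univ.filter (fun s => f s ≠ j), (X s ∩ Y j).card
        ≤ ∑ s ∈ A.filter (fun s => f s = j), (X s).card
          + ∑ s ∈ A.filter (fun s => ¬ f s = j), (X s).card := by
          rw [h1]; exact Nat.add_le_add_left h2 _
      _ = ∑ s ∈ A, (X s).card := hsplitA
end

section
/- If a classifier f satisfies X ∩ f(X) ≠ ∅ for all granules X, then for every i, |Low(Y_i)| ≤ n_{ii} and |Upp(Y_i)| ≥ n_{i•} + n_{•i} − n_{ii}, where n_{i•} and n_{•i} are the i-th row and column sums of the confusion matrix. -/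
open Finset

lemma cover_sum {U : Type} [DecidableEq U] {n : ℕ} (Y : Fin n → Finset U)
    (hYdis : ∀ i j, i ≠ j → Disjoint (Y i) (Y j))
    (hYcov : ∀ u, ∃ i, u ∈ Y i) (A : Finset U) :
    ∑ j, (A ∩ Y j).card = A.card := by
  rw [← Finset.card_biUnion]
  · congr 1
    ext u
    simp only [Finset.mem_biUnion, Finset.mem_univ, true_and, Finset.mem_inter]
    constructor
    · rintro ⟨j, hu, _⟩; exact hu
    · intro hu; obtain ⟨j, hj⟩ := hYcov u; exact ⟨j, hu, hj⟩
  · intro a _ b _ hab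
    exact (hYdis a b hab).mono Finset.inter_subset_right Finset.inter_subset_right

theorem stmt16 (U : Type) [Fintype U] [DecidableEq U] [Nonempty U]
    (m k : ℕ) (X : Fin m → Finset U) (Y : Fin k → Finset U)
    (f : Fin m → Fin k)
    (hXdis : ∀ s t : Fin m, s ≠ t → Disjoint (X s) (X t))
    (hXcov : ∀ u : U, ∃ s, u ∈ X s)
    (hXne : ∀ s, (X s).Nonempty)
    (hYdis : ∀ i j : Fin k, i ≠ j → Disjoint (Y i) (Y j))
    (hYcov : ∀ u : U, ∃ i, u ∈ Y i)
    (hf : ∀ s, (X s ∩ Y (f s)).Nonempty)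
    :
    ∀ i,
      (low X (Y i)).card ≤ conf X Y f i i ∧
      (∑ j, conf X Y f i j) + (∑ j, conf X Y f j i) - conf X Y f i i ≤
        (upp X (Y i)).card := by
  intro i
  have hdisf : ∀ F : Finset (Fin m), ∀ s ∈ F, ∀ t ∈ F, s ≠ t → Disjoint (X s) (X t) :=
    fun F s _ t _ h => hXdis s t h
  constructor
  · calc (low X (Y i)).card
        ≤ ∑ s ∈ univ.filter (fun s => X s ⊆ Y i), (X s).card := Finset.card_biUnion_le
      _ = ∑ s ∈ univ.filter (fun s => X s ⊆ Y i), (X s ∩ Y i).card := by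
          refine Finset.sum_congr rfl fun s hs => ?_
          simp only [mem_filter] at hs
          rw [Finset.inter_eq_left.mpr hs.2]
      _ ≤ conf X Y f i i := by
          refine Finset.sum_le_sum_of_subset fun s hs => ?_
          simp only [mem_filter, mem_univ, true_and] at *
          obtain ⟨u, hu⟩ := hf s
          rw [Finset.mem_inter] at hu
          by_contra hne
          exact Finset.disjoint_left.mp (hYdis (f s) i hne) hu.2 (hs hu.1)
  · have hA : (hatY X f i).card = ∑ j, conf X Y f i j := by
      unfold hatY conf
      rw [Finset.card_biUnion (hdisf _), Finset.sum_comm]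
      refine Finset.sum_congr rfl fun s _ => ?_
      rw [cover_sum Y hYdis hYcov]
    have hB : (Y i).card = ∑ j, conf X Y f j i := by
      unfold conf
      rw [Finset.sum_fiberwise univ f (fun s => (X s ∩ Y i).card)]
      rw [← cover_sum X hXdis hXcov (Y i)]
      exact Finset.sum_congr rfl fun s _ => by rw [Finset.inter_comm]
    have hC : (hatY X f i ∩ Y i).card = conf X Y f i i := by
      unfold hatY conf
      rw [Finset.biUnion_inter]
      rw [Finset.card_biUnion]
      intro a _ b _ hab
      exact (hXdis a b hab).mono Finset.inter_subset_left Finset.inter_subset_left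
    have hCB : (hatY X f i ∩ Y i).card ≤ (Y i).card :=
      Finset.card_le_card Finset.inter_subset_right
    have hsub : hatY X f i ∪ Y i ⊆ upp X (Y i) := by
      intro u hu
      rw [Finset.mem_union] at hu
      unfold upp
      rw [Finset.mem_biUnion]
      rcases hu with hu | hu
      · unfold hatY at hu
        rw [Finset.mem_biUnion] at hu
        obtain ⟨s, hs, hus⟩ := hu
        simp only [mem_filter, mem_univ, true_and] at hs
        refine ⟨s, ?_, hus⟩
        simp only [mem_filter, mem_univ, true_and]
        rw [← hs]; exact hf s
      · obtain ⟨s, hs⟩ := hXcov u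
        refine ⟨s, ?_, hs⟩
        simp only [mem_filter, mem_univ, true_and]
        exact ⟨u, Finset.mem_inter.mpr ⟨hs, hu⟩⟩
    have hcu := Finset.card_union_add_card_inter (hatY X f i) (Y i)
    have := Finset.card_le_card hsub
    omega
end
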